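/- arXiv:2410.06093 — 2 statements merged into one kernel-verified Lean document; each statement's English description precedes it below -/
import Mathlib

section
/- If f : ℝ → ℝ is a Schwartz function that is even, non-negative, and monotone decreasing on [0,∞), then its self-convolution f * f is also even, non-negative, and monotone decreasing on [0,∞). -/
open MeasureTheory

/-- If `f : ℝ → ℝ` is a Schwartz function that is even, non-negative, and monotone
decreasing on `[0,∞)`, then its self-convolution `(f*f)(x) = ∫ f y * f (x - y) dy`
is also even, non-negative, and monotone decreasing on `[0,∞)`. -/
theorem stmt1 (f : SchwartzMap ℝ ℝ)
    (heven : ∀ x, f (-x) = f x)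
    (hnonneg : ∀ x, 0 ≤ f x)
    (hmono : AntitoneOn (fun x => f x) (Set.Ici (0 : ℝ))) :
    (∀ x : ℝ, (∫ y : ℝ, f y * f (-x - y)) = ∫ y : ℝ, f y * f (x - y)) ∧
    (∀ x : ℝ, 0 ≤ ∫ y : ℝ, f y * f (x - y)) ∧
    AntitoneOn (fun x : ℝ => ∫ y : ℝ, f y * f (x - y)) (Set.Ici (0 : ℝ)) := by
  -- basic facts
  have habs : ∀ x : ℝ, f x = f |x| := by
    intro x
    rcases abs_cases x with ⟨h, _⟩ | ⟨h, _⟩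
    · rw [h]
    · rw [h, heven]
  have hcmp : ∀ u v : ℝ, |u| ≤ |v| → f v ≤ f u := by
    intro u v h
    rw [habs u, habs v]
    exact hmono (abs_nonneg u) (abs_nonneg v) h
  obtain ⟨C, hC⟩ : ∃ C : ℝ, ∀ x, ‖f x‖ ≤ C :=
    ⟨(SchwartzMap.seminorm ℝ 0 0) f, fun x => f.norm_le_seminorm ℝ x⟩
  have hswap : ∀ c y : ℝ, f (c - y) = f (y - c) := by
    intro c y
    rw [← heven (y - c)]; ring_nf
  have hInt : ∀ c d : ℝ, Integrable (fun y => f (y - c) * f (y - d)) := by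
    intro c d
    exact (f.integrable.comp_sub_right d).bdd_mul
      ((f.continuous.comp (continuous_id.sub continuous_const)).aestronglyMeasurable)
      (Filter.Eventually.of_forall fun y => hC _)
  have hIx : ∀ x : ℝ, Integrable (fun y => f y * f (x - y)) := by
    intro x
    have : (fun y => f y * f (x - y)) = fun y => f (y - 0) * f (y - x) := by
      funext y; rw [hswap x y, sub_zero]
    rw [this]; exact hInt 0 x
  refine ⟨?_, ?_, ?_⟩
  · -- evenness
    intro x
    have h1 := integral_neg_eq_self (fun y => f y * f (-x - y)) (volume : Measure ℝ)
    rw [← h1]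
    congr 1
    funext y
    rw [heven y]
    congr 1
    rw [← heven (x - y)]
    ring_nf
  · intro x
    exact integral_nonneg fun y => mul_nonneg (hnonneg y) (hnonneg _)
  · intro a ha b hb hab
    simp only [Set.mem_Ici] at ha hb
    set h : ℝ → ℝ := fun y => f y * f (a - y) - f y * f (b - y) with hh
    -- rewrite goal as 0 ≤ ∫ h
    rw [show (fun x : ℝ => ∫ y : ℝ, f y * f (x - y)) b = ∫ y : ℝ, f y * f (b - y) from rfl,
      show (fun x : ℝ => ∫ y : ℝ, f y * f (x - y)) a = ∫ y : ℝ, f y * f (a - y) from rfl]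
    have hinth : Integrable h := (hIx a).sub (hIx b)
    have key : ∀ y : ℝ, 0 ≤ h y + h (a + b - y) := by
      intro y
      have e1 : h (a + b - y) = f (a + b - y) * f (b - y) - f (a + b - y) * f (a - y) := by
        simp only [hh]
        have e2 : f (a - (a + b - y)) = f (b - y) := by
          rw [show a - (a + b - y) = -(b - y) by ring, heven]
        have e3 : f (b - (a + b - y)) = f (a - y) := by
          rw [show b - (a + b - y) = -(a - y) by ring, heven]
        rw [e2, e3]
      have prod : h y + h (a + b - y)
          = (f y - f (a + b - y)) * (f (a - y) - f (b - y)) := by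
        rw [e1]; simp only [hh]; ring
      rw [prod]
      rcases le_total y ((a + b) / 2) with hy | hy
      · apply mul_nonneg
        · rw [sub_nonneg]
          apply hcmp
          have h1 := le_abs_self (a + b - y)
          have h2 := neg_abs_le (a + b - y)
          rw [abs_le]
          constructor <;> nlinarith
        · rw [sub_nonneg]
          apply hcmp
          have h1 := le_abs_self (b - y)
          have h2 := neg_abs_le (b - y)
          rw [abs_le]
          constructor <;> nlinarith
      · have f1 : f y ≤ f (a + b - y) := by
          apply hcmp
          have h1 := le_abs_self y
          have h2 := neg_abs_le y
          rw [abs_le]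
          constructor <;> nlinarith
        have f2 : f (a - y) ≤ f (b - y) := by
          apply hcmp
          have h1 := le_abs_self (a - y)
          have h2 := neg_abs_le (a - y)
          rw [abs_le]
          constructor <;> nlinarith
        nlinarith
    -- reflection invariance of the integral
    have hIr : Integrable (fun y => h (a + b - y)) := by
      have : (fun y => h (a + b - y))
          = fun y => f (y - (a + b)) * f (y - b) - f (y - (a + b)) * f (y - a) := by
        funext y
        simp only [hh]
        rw [hswap (a + b) y,
          show f (a - (a + b - y)) = f (y - b) by rw [show a - (a+b-y) = y - b by ring],
          show f (b - (a + b - y)) = f (y - a) by rw [show b - (a+b-y) = y - a by ring]]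
      rw [this]
      exact (hInt (a + b) b).sub (hInt (a + b) a)
    have hrefl : (∫ y : ℝ, h (a + b - y)) = ∫ y : ℝ, h y := by
      have h1 := integral_neg_eq_self (fun y => h (a + b + y)) (volume : Measure ℝ)
      have h2 : (fun y : ℝ => h (a + b + -y)) = fun y => h (a + b - y) := by
        funext y; rw [← sub_eq_add_neg]
      rw [h2] at h1
      rw [h1]
      exact integral_add_left_eq_self (μ := volume) h (a + b)
    have sum : (0 : ℝ) ≤ ∫ y : ℝ, (h y + h (a + b - y)) :=
      integral_nonneg key
    rw [integral_add hinth hIr, hrefl] at sum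
    have hpos : (0:ℝ) ≤ ∫ y, h y := by linarith
    have hsub := integral_sub (hIx a) (hIx b)
    simp only [hh] at hpos
    rw [hsub] at hpos
    linarith
end

section
/- Let ψ̂ be an entire function such that for every N ∈ ℕ there exists C_N > 0 with |ψ̂(z)| ≤ C_N e^{|Im z|}/(1+|z|)^N for all z ∈ ℂ, and suppose ψ̂ is real and odd on ℝ. Define g(ξ) = -∫_{Re ξ}^{∞} ψ̂(t) dt - ∫_{γ₂} ψ̂(z) dz, where γ₂ is the straight segment from Re(ξ) to ξ. Then g is entire, g'(ξ) = ψ̂(ξ) for all ξ, g restricted to ℝ is a Schwartz function, and |g(ξ)| ≤ C(1+|ξ|) e^{|Im ξ|} for some constant C and all ξ ∈ ℂ. -/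
open MeasureTheory Complex

-- real-axis decay: from the N-bound, on reals with margin for Cauchy circles
lemma pw_real_decay {ψ : ℂ → ℂ} {C : ℝ} (hC : 0 < C)
    (hb : ∀ z : ℂ, ‖ψ z‖ ≤ C * Real.exp |z.im| / (1 + ‖z‖) ^ 2) (t : ℝ) :
    ‖ψ (t:ℂ)‖ ≤ C * (1 + t^2)⁻¹ := by
  have h := hb (t:ℂ)
  simp only [Complex.ofReal_im, abs_zero, Real.exp_zero, mul_one, Complex.norm_real, Real.norm_eq_abs] at h
  have h1 : (1 : ℝ) + t^2 ≤ (1 + |t|)^2 := by nlinarith [abs_nonneg t, _root_.sq_abs t]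
  have h2 : (0:ℝ) < 1 + t^2 := by positivity
  calc ‖ψ (t:ℂ)‖ ≤ C / (1 + |t|)^2 := h
    _ ≤ C / (1 + t^2) := by
        apply div_le_div_of_nonneg_left hC.le h2 h1
    _ = C * (1 + t^2)⁻¹ := by ring

lemma pw_integrable {ψ : ℂ → ℂ} (hcont : Continuous ψ) {C : ℝ} (hC : 0 < C)
    (hb : ∀ z : ℂ, ‖ψ z‖ ≤ C * Real.exp |z.im| / (1 + ‖z‖) ^ 2) :
    Integrable (fun t : ℝ => ψ (t:ℂ)) := by
  refine Integrable.mono' ((integrable_inv_one_add_sq).const_mul C)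
    (hcont.comp Complex.continuous_ofReal).aestronglyMeasurable
    (Filter.Eventually.of_forall fun t => ?_)
  simpa using pw_real_decay hC hb t

lemma pw_ioi_sub {f : ℝ → ℂ} (hf : Integrable f) (a b : ℝ) :
    (∫ t in Set.Ioi a, f t) - ∫ t in Set.Ioi b, f t = ∫ t in a..b, f t := by
  have ha := MeasureTheory.integral_add_compl (measurableSet_Iic (a := a)) hf
  have hb := MeasureTheory.integral_add_compl (measurableSet_Iic (a := b)) hf
  rw [Set.compl_Iic] at ha hb
  have := intervalIntegral.integral_Iic_sub_Iic (hf.integrableOn) (hf.integrableOn) (a := a) (b := b)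
  linear_combination ha - hb + this

lemma pw_diff {ψ : ℂ → ℂ} (hψ : Differentiable ℂ ψ)
    (hint : Integrable (fun t : ℝ => ψ (t:ℂ)))
    (g : ℂ → ℂ)
    (hg : ∀ ξ : ℂ, g ξ = -(∫ t in Set.Ioi ξ.re, ψ (t : ℂ))
        + ∫ s in (0 : ℝ)..ξ.im, ψ (ξ.re + s * Complex.I) * Complex.I)
    (ξ ξ' : ℂ) :
    g ξ' - g ξ = (∫ t in ξ.re..ξ'.re, ψ (t + ξ'.im * I))
      + I • ∫ s in ξ.im..ξ'.im, ψ (ξ.re + s * I) := by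
  have hrect := Complex.integral_boundary_rect_eq_zero_of_differentiableOn ψ
    (ξ.re : ℂ) ξ' (hψ.differentiableOn)
  simp only [Complex.ofReal_re, Complex.ofReal_im] at hrect
  have h0 : (∫ t in ξ.re..ξ'.re, ψ (t + (0:ℝ) * I)) = ∫ t in ξ.re..ξ'.re, ψ t := by
    congr 1; ext t; norm_num
  rw [h0] at hrect
  have hioi : (∫ t in Set.Ioi ξ.re, ψ (t:ℂ)) - ∫ t in Set.Ioi ξ'.re, ψ (t:ℂ)
      = ∫ t in ξ.re..ξ'.re, ψ (t:ℂ) := pw_ioi_sub hint _ _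
  have hv : ∀ (x : ℝ) (y : ℝ), (∫ s in (0:ℝ)..y, ψ (x + s * I) * I)
      = I • ∫ s in (0:ℝ)..y, ψ ((x:ℂ) + s * I) := by
    intro x y
    rw [intervalIntegral.integral_mul_const]
    simp [smul_eq_mul, mul_comm]
  have hvert : I • (∫ s in (0:ℝ)..ξ'.im, ψ ((ξ.re:ℂ) + s * I))
      - I • (∫ s in (0:ℝ)..ξ.im, ψ ((ξ.re:ℂ) + s * I))
      = I • ∫ s in ξ.im..ξ'.im, ψ ((ξ.re:ℂ) + s * I) := by
    rw [← smul_sub, intervalIntegral.integral_interval_sub_left]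
    · exact (hψ.continuous.comp (by continuity)).intervalIntegrable _ _
    · exact (hψ.continuous.comp (by continuity)).intervalIntegrable _ _
  rw [hg ξ', hg ξ, hv, hv]
  linear_combination hioi + hrect + hvert

lemma pw_hasDerivAt {ψ : ℂ → ℂ} (hψ : Differentiable ℂ ψ)
    (hint : Integrable (fun t : ℝ => ψ (t:ℂ)))
    (g : ℂ → ℂ)
    (hg : ∀ ξ : ℂ, g ξ = -(∫ t in Set.Ioi ξ.re, ψ (t : ℂ))
        + ∫ s in (0 : ℝ)..ξ.im, ψ (ξ.re + s * Complex.I) * Complex.I)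
    (ξ : ℂ) : HasDerivAt g (ψ ξ) ξ := by
  rw [hasDerivAt_iff_isLittleO, Asymptotics.isLittleO_iff]
  intro c hc
  obtain ⟨δ, hδ, hball⟩ := Metric.continuousAt_iff.1 hψ.continuous.continuousAt (c/2) (by linarith)
  rw [Metric.eventually_nhds_iff]
  refine ⟨δ/2, by linarith, fun ξ' hξ' => ?_⟩
  rw [Complex.dist_eq] at hξ'
  set x := ξ.re; set y := ξ.im; set x' := ξ'.re; set y' := ξ'.im
  have hre : |x' - x| ≤ ‖ξ' - ξ‖ := by
    simpa using Complex.abs_re_le_norm (ξ' - ξ)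
  have him : |y' - y| ≤ ‖ξ' - ξ‖ := by
    simpa using Complex.abs_im_le_norm (ξ' - ξ)
  have key : ∀ w : ℂ, ‖w - ξ‖ < δ → ‖ψ w - ψ ξ‖ ≤ c/2 := by
    intro w hw
    have := hball (show dist w ξ < δ by rwa [Complex.dist_eq])
    rw [dist_eq_norm] at this
    exact this.le
  have hE1cont : Continuous (fun t : ℝ => ψ ((t:ℂ) + y' * I) - ψ ξ) := by
    exact (hψ.continuous.comp (by continuity)).sub continuous_const
  have hE2cont : Continuous (fun s : ℝ => ψ ((x:ℂ) + s * I) - ψ ξ) := by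
    exact (hψ.continuous.comp (by continuity)).sub continuous_const
  have hE1 : ‖∫ t in x..x', (ψ ((t:ℂ) + y' * I) - ψ ξ)‖ ≤ c/2 * |x' - x| := by
    apply intervalIntegral.norm_integral_le_of_norm_le_const
    intro t ht
    apply key
    have ht' : |t - x| ≤ |x' - x| := Set.abs_sub_left_of_mem_uIcc (Set.uIoc_subset_uIcc ht)
    calc ‖((t:ℂ) + y' * I) - ξ‖ ≤ |((t:ℂ) + y' * I - ξ).re| + |((t:ℂ) + y' * I - ξ).im| :=
          Complex.norm_le_abs_re_add_abs_im _
      _ = |t - x| + |y' - y| := by simp [x, y]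
      _ ≤ |x' - x| + |y' - y| := by linarith
      _ ≤ ‖ξ' - ξ‖ + ‖ξ' - ξ‖ := by linarith
      _ < δ := by linarith
  have hE2 : ‖∫ s in y..y', (ψ ((x:ℂ) + s * I) - ψ ξ)‖ ≤ c/2 * |y' - y| := by
    apply intervalIntegral.norm_integral_le_of_norm_le_const
    intro s hs
    apply key
    have hs' : |s - y| ≤ |y' - y| := Set.abs_sub_left_of_mem_uIcc (Set.uIoc_subset_uIcc hs)
    calc ‖((x:ℂ) + s * I) - ξ‖ ≤ |((x:ℂ) + s * I - ξ).re| + |((x:ℂ) + s * I - ξ).im| :=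
          Complex.norm_le_abs_re_add_abs_im _
      _ = |(0:ℝ)| + |s - y| := by simp [x, y]
      _ ≤ |y' - y| := by simp; linarith
      _ ≤ ‖ξ' - ξ‖ := him
      _ < δ := by linarith
  have hsplit : g ξ' - g ξ - (ξ' - ξ) • ψ ξ
      = (∫ t in x..x', (ψ ((t:ℂ) + y' * I) - ψ ξ))
        + I • ∫ s in y..y', (ψ ((x:ℂ) + s * I) - ψ ξ) := by
    have c1 : Continuous (fun t : ℝ => ψ ((t:ℂ) + (y':ℝ) * I)) := hψ.continuous.comp (by continuity)
    have c2 : Continuous (fun s : ℝ => ψ (((x:ℝ):ℂ) + (s:ℝ) * I)) := hψ.continuous.comp (by continuity)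
    have i1 : IntervalIntegrable _ MeasureTheory.volume x x' := c1.intervalIntegrable x x'
    have i2 : IntervalIntegrable _ MeasureTheory.volume y y' := c2.intervalIntegrable y y'
    rw [pw_diff hψ hint g hg ξ ξ']
    rw [intervalIntegral.integral_sub i1 intervalIntegrable_const,
      intervalIntegral.integral_sub i2 intervalIntegrable_const]
    simp only [intervalIntegral.integral_const, smul_eq_mul]
    have : (ξ' - ξ) = ((x' - x : ℝ) : ℂ) + ((y' - y : ℝ) : ℂ) * I := by
      apply Complex.ext <;> simp [x, y, x', y']
    rw [this]
    simp only [Complex.real_smul]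
    push_cast
    ring
  rw [hsplit]
  calc ‖(∫ t in x..x', (ψ ((t:ℂ) + y' * I) - ψ ξ))
        + I • ∫ s in y..y', (ψ ((x:ℂ) + s * I) - ψ ξ)‖
      ≤ ‖∫ t in x..x', (ψ ((t:ℂ) + y' * I) - ψ ξ)‖
        + ‖I • ∫ s in y..y', (ψ ((x:ℂ) + s * I) - ψ ξ)‖ := norm_add_le _ _
    _ ≤ c/2 * |x' - x| + c/2 * |y' - y| := by
        rw [norm_smul]
        simpa using add_le_add hE1 hE2
    _ ≤ c/2 * ‖ξ' - ξ‖ + c/2 * ‖ξ' - ξ‖ := by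
        have := hc.le; gcongr
    _ = c * ‖ξ' - ξ‖ := by ring
    _ = c * ‖ξ' - ξ‖ := by rfl

lemma pw_horiz_bound {ψ : ℂ → ℂ} (hcont : Continuous ψ) {C : ℝ} (hC : 0 < C)
    (hb : ∀ z : ℂ, ‖ψ z‖ ≤ C * Real.exp |z.im| / (1 + ‖z‖) ^ 2) (x : ℝ) :
    ‖∫ t in Set.Ioi x, ψ (t:ℂ)‖ ≤ C * Real.pi := by
  have hint := pw_integrable hcont hC hb
  calc ‖∫ t in Set.Ioi x, ψ (t:ℂ)‖ ≤ ∫ t in Set.Ioi x, ‖ψ (t:ℂ)‖ :=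
        norm_integral_le_integral_norm _
    _ ≤ ∫ t in Set.Ioi x, C * (1 + t^2)⁻¹ := by
        apply setIntegral_mono_on hint.norm.integrableOn
          ((integrable_inv_one_add_sq.const_mul C).integrableOn) measurableSet_Ioi
        intro t _; exact pw_real_decay hC hb t
    _ ≤ ∫ t : ℝ, C * (1 + t^2)⁻¹ := by
        apply setIntegral_le_integral (integrable_inv_one_add_sq.const_mul C)
        filter_upwards with t
        positivity
    _ = C * Real.pi := by
        rw [MeasureTheory.integral_const_mul, integral_univ_inv_one_add_sq]

lemma pw_growth {ψ : ℂ → ℂ} (hcont : Continuous ψ)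
    {C1 C2 : ℝ} (hC1 : 0 < C1) (hC2 : 0 < C2)
    (hb1 : ∀ z : ℂ, ‖ψ z‖ ≤ C1 * Real.exp |z.im| / (1 + ‖z‖) ^ 1)
    (hb2 : ∀ z : ℂ, ‖ψ z‖ ≤ C2 * Real.exp |z.im| / (1 + ‖z‖) ^ 2)
    (g : ℂ → ℂ)
    (hg : ∀ ξ : ℂ, g ξ = -(∫ t in Set.Ioi ξ.re, ψ (t : ℂ))
        + ∫ s in (0 : ℝ)..ξ.im, ψ (ξ.re + s * Complex.I) * Complex.I)
    (ξ : ℂ) :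
    ‖g ξ‖ ≤ (C2 * Real.pi + C1) * (1 + ‖ξ‖) * Real.exp |ξ.im| := by
  have h1 : ‖∫ t in Set.Ioi ξ.re, ψ (t:ℂ)‖ ≤ C2 * Real.pi := pw_horiz_bound hcont hC2 hb2 ξ.re
  have h2 : ‖∫ s in (0:ℝ)..ξ.im, ψ (ξ.re + s * I) * I‖ ≤ C1 * Real.exp |ξ.im| * |ξ.im - 0| := by
    apply intervalIntegral.norm_integral_le_of_norm_le_const
    intro s hs
    have hs' : |s| ≤ |ξ.im| := by
      simpa using Set.abs_sub_left_of_mem_uIcc (Set.uIoc_subset_uIcc hs)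
    have him : |((ξ.re:ℂ) + s * I).im| = |s| := by simp
    calc ‖ψ ((ξ.re:ℂ) + s * I) * I‖ = ‖ψ ((ξ.re:ℂ) + s * I)‖ := by
          simp [map_mul]
      _ ≤ C1 * Real.exp |((ξ.re:ℂ) + s * I).im| / (1 + ‖(ξ.re:ℂ) + s * I‖) ^ 1 :=
          hb1 _
      _ ≤ C1 * Real.exp |ξ.im| / 1 := by
          apply div_le_div₀ (by positivity)
          · have := Real.exp_le_exp.2 (him ▸ hs')
            exact mul_le_mul_of_nonneg_left this hC1.le
          · exact one_pos
          · simpa using norm_nonneg ((ξ.re:ℂ) + s * I)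
      _ = C1 * Real.exp |ξ.im| := by ring
  have hab : ‖g ξ‖ ≤ C2 * Real.pi + C1 * Real.exp |ξ.im| * |ξ.im| := by
    rw [hg ξ]
    rw [sub_zero] at h2
    refine le_trans (norm_add_le _ _) ?_
    rw [norm_neg]
    exact add_le_add h1 h2
  have he : (1:ℝ) ≤ Real.exp |ξ.im| := Real.one_le_exp (abs_nonneg _)
  have him : |ξ.im| ≤ ‖ξ‖ := Complex.abs_im_le_norm ξ
  have habs : (0:ℝ) ≤ ‖ξ‖ := norm_nonneg _
  have hE : (0:ℝ) < Real.exp |ξ.im| := Real.exp_pos _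
  have t1 : C1 * Real.exp |ξ.im| * |ξ.im| ≤ C1 * Real.exp |ξ.im| * ‖ξ‖ :=
    mul_le_mul_of_nonneg_left him (by positivity)
  have t2 : C2 * Real.pi ≤ C2 * Real.pi * Real.exp |ξ.im| :=
    le_mul_of_one_le_right (by positivity) he
  nlinarith [mul_nonneg (mul_nonneg hC2.le Real.pi_pos.le) (mul_nonneg habs hE.le),
    mul_nonneg hC1.le hE.le]


lemma pw_cauchy_est {ψ : ℂ → ℂ} (hψ : Differentiable ℂ ψ) {N : ℕ} {C : ℝ} (hC : 0 < C)
    (hb : ∀ z : ℂ, ‖ψ z‖ ≤ C * Real.exp |z.im| / (1 + ‖z‖) ^ N)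
    (n : ℕ) (x : ℝ) :
    ‖iteratedDeriv n ψ (x:ℂ)‖ ≤ n.factorial * (C * Real.exp 1 * 2^N) / (1 + |x|)^N := by
  set M : ℝ := C * Real.exp 1 * 2^N / (1 + |x|)^N with hM
  have hMpos : 0 < M := by positivity
  have hcirc : ∀ θ : ℝ, ‖ψ (circleMap (x:ℂ) 1 θ)‖ ≤ M := by
    intro θ
    set z := circleMap (x:ℂ) 1 θ with hz
    have him : |z.im| ≤ 1 := by
      have : z.im = Real.sin θ := by simp [hz, circleMap]
      rw [this]; exact abs_le.2 ⟨Real.neg_one_le_sin θ, Real.sin_le_one θ⟩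
    have habs : |x| - 1 ≤ ‖z‖ := by
      have h1 : ‖(x:ℂ)‖ - ‖(x:ℂ) - z‖ ≤ ‖z‖ := by
        have := norm_sub_norm_le ((x:ℂ)) ((x:ℂ) - z)
        simpa using this
      have h2 : ‖(x:ℂ) - z‖ = 1 := by
        rw [hz, ← neg_sub, norm_neg, circleMap_sub_center, norm_circleMap_zero]
        norm_num
      simpa [h2] using h1
    have hden : (1 + |x|) / 2 ≤ 1 + ‖z‖ := by
      have := norm_nonneg z; linarith
    have hdenpow : ((1 + |x|)/2) ^ N ≤ (1 + ‖z‖) ^ N := by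
      apply pow_le_pow_left₀ (by positivity) hden
    calc ‖ψ z‖ ≤ C * Real.exp |z.im| / (1 + ‖z‖) ^ N := hb z
      _ ≤ C * Real.exp 1 / ((1 + |x|)/2) ^ N := by
          apply div_le_div₀ (by positivity)
            (mul_le_mul_of_nonneg_left (Real.exp_le_exp.2 him) hC.le)
            (by positivity) hdenpow
      _ = M := by rw [hM, div_pow]; field_simp
  have hps := hψ.hasFPowerSeriesOnBall (x:ℂ) (R := 1) one_pos
  have hfact := hps.factorial_smul (1:ℂ) n
  have h1 : ‖iteratedDeriv n ψ (x:ℂ)‖ = n.factorial * ‖cauchyPowerSeries ψ (x:ℂ) 1 n (fun _ => (1:ℂ))‖ := by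
    rw [iteratedDeriv_eq_iteratedFDeriv, ← hfact, ← Nat.cast_smul_eq_nsmul ℝ, norm_smul]
    simp
  rw [h1]
  have h2 : ‖cauchyPowerSeries ψ (x:ℂ) 1 n (fun _ => (1:ℂ))‖ ≤ M := by
    calc ‖cauchyPowerSeries ψ (x:ℂ) 1 n (fun _ => (1:ℂ))‖
        ≤ ‖cauchyPowerSeries ψ (x:ℂ) 1 n‖ * ∏ _i : Fin n, ‖(1:ℂ)‖ :=
          ContinuousMultilinearMap.le_opNorm _ _
      _ = ‖cauchyPowerSeries ψ (x:ℂ) 1 n‖ := by simp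
      _ ≤ ((2 * Real.pi)⁻¹ * ∫ θ in (0:ℝ)..2 * Real.pi, ‖ψ (circleMap (x:ℂ) 1 θ)‖) * |(1:ℝ)|⁻¹ ^ n :=
          norm_cauchyPowerSeries_le _ _ _ _
      _ = (2 * Real.pi)⁻¹ * ∫ θ in (0:ℝ)..2 * Real.pi, ‖ψ (circleMap (x:ℂ) 1 θ)‖ := by simp
      _ ≤ (2 * Real.pi)⁻¹ * (M * (2 * Real.pi)) := by
          apply mul_le_mul_of_nonneg_left _ (by positivity)
          have hle : ‖∫ θ in (0:ℝ)..2 * Real.pi, ‖ψ (circleMap (x:ℂ) 1 θ)‖‖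
              ≤ M * |2 * Real.pi - 0| := by
            apply intervalIntegral.norm_integral_le_of_norm_le_const
            intro θ _
            simpa using hcirc θ
          rw [sub_zero, abs_of_pos Real.two_pi_pos] at hle
          exact le_trans (le_abs_self _) hle
      _ = M := by field_simp
  calc (n.factorial : ℝ) * ‖cauchyPowerSeries ψ (x:ℂ) 1 n (fun _ => (1:ℂ))‖
      ≤ n.factorial * M := by
        apply mul_le_mul_of_nonneg_left h2 (by positivity)
    _ = n.factorial * (C * Real.exp 1 * 2^N) / (1 + |x|)^N := by rw [hM]; ring

lemma pw_restrict_iteratedDeriv : ∀ (n : ℕ) (f : ℂ → ℂ), Differentiable ℂ f → ∀ x : ℝ,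
    iteratedDeriv n (fun t : ℝ => f (t:ℂ)) x = iteratedDeriv n f (x:ℂ) := by
  intro n
  induction n with
  | zero => intro f _ x; simp
  | succ n ih =>
    intro f hf x
    have hd : Differentiable ℂ (deriv f) := by
      have h1 : ContDiff ℂ (↑(⊤:ℕ∞)) f := hf.contDiff
      exact (contDiff_infty_iff_deriv.1 h1).2.differentiable (by simp)
    have hderiv : deriv (fun t : ℝ => f (t:ℂ)) = fun t : ℝ => deriv f (t:ℂ) := by
      funext t
      exact ((hf.differentiableAt).hasDerivAt.comp_ofReal).deriv
    rw [iteratedDeriv_succ', iteratedDeriv_succ', hderiv]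
    exact ih (deriv f) hd x

lemma pw_total_zero {ψ : ℂ → ℂ} (hint : Integrable (fun t : ℝ => ψ (t:ℂ)))
    (hodd : ∀ x : ℝ, ψ ((-x : ℝ) : ℂ) = -ψ (x : ℂ)) :
    ∫ t : ℝ, ψ (t:ℂ) = 0 := by
  have h := MeasureTheory.integral_neg_eq_self (fun t : ℝ => ψ (t:ℂ)) volume
  have h2 : ∫ t : ℝ, ψ ((-t : ℝ):ℂ) = -∫ t : ℝ, ψ (t:ℂ) := by
    simp_rw [hodd]
    exact MeasureTheory.integral_neg _
  rw [h2] at h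
  have : (2:ℂ) * ∫ t : ℝ, ψ (t:ℂ) = 0 := by linear_combination -h
  simpa using this

lemma pw_tail_bound {ψ : ℂ → ℂ} (hcont : Continuous ψ) {C : ℝ} (hC : 0 < C) {k : ℕ}
    (hb : ∀ z : ℂ, ‖ψ z‖ ≤ C * Real.exp |z.im| / (1 + ‖z‖) ^ (k+2))
    (hint : Integrable (fun t : ℝ => ψ (t:ℂ)))
    {S : Set ℝ} (hSm : MeasurableSet S) (x : ℝ) (hS : ∀ t ∈ S, |x| ≤ |t|) :
    ‖∫ t in S, ψ (t:ℂ)‖ ≤ C * Real.pi / (1 + |x|)^k := by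
  have hpt : ∀ t ∈ S, ‖ψ (t:ℂ)‖ ≤ (C / (1 + |x|)^k) * (1 + t^2)⁻¹ := by
    intro t ht
    have h := hb (t:ℂ)
    simp only [Complex.ofReal_im, abs_zero, Real.exp_zero, mul_one, Complex.norm_real, Real.norm_eq_abs] at h
    have hxt : (1:ℝ) + |x| ≤ 1 + |t| := by linarith [hS t ht]
    have hden : (1 + |x|)^k * (1 + t^2) ≤ (1 + |t|)^(k+2) := by
      have h1 : (1 + |x|)^k ≤ (1 + |t|)^k := by
        apply pow_le_pow_left₀ (by positivity) hxt
      have h2 : (1:ℝ) + t^2 ≤ (1 + |t|)^2 := by nlinarith [abs_nonneg t, _root_.sq_abs t]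
      calc (1 + |x|)^k * (1 + t^2) ≤ (1 + |t|)^k * (1 + |t|)^2 := by
            apply mul_le_mul h1 h2 (by positivity) (by positivity)
        _ = (1 + |t|)^(k+2) := by rw [← pow_add]
    calc ‖ψ (t:ℂ)‖ ≤ C / (1 + |t|)^(k+2) := h
      _ ≤ C / ((1 + |x|)^k * (1 + t^2)) := by
          apply div_le_div_of_nonneg_left hC.le (by positivity) hden
      _ = (C / (1 + |x|)^k) * (1 + t^2)⁻¹ := by
          rw [div_mul_eq_div_div, div_eq_mul_inv]
  calc ‖∫ t in S, ψ (t:ℂ)‖ ≤ ∫ t in S, ‖ψ (t:ℂ)‖ := norm_integral_le_integral_norm _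
    _ ≤ ∫ t in S, (C / (1 + |x|)^k) * (1 + t^2)⁻¹ := by
        apply setIntegral_mono_on (hint.norm.integrableOn)
          ((integrable_inv_one_add_sq.const_mul _).integrableOn) hSm hpt
    _ ≤ ∫ t : ℝ, (C / (1 + |x|)^k) * (1 + t^2)⁻¹ := by
        apply setIntegral_le_integral (integrable_inv_one_add_sq.const_mul _)
        filter_upwards with t; positivity
    _ = C * Real.pi / (1 + |x|)^k := by
        rw [MeasureTheory.integral_const_mul, integral_univ_inv_one_add_sq]; ring

lemma pw_g_decay {ψ : ℂ → ℂ} (hcont : Continuous ψ) {C : ℝ} (hC : 0 < C) {k : ℕ}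
    (hb : ∀ z : ℂ, ‖ψ z‖ ≤ C * Real.exp |z.im| / (1 + ‖z‖) ^ (k+2))
    (hint : Integrable (fun t : ℝ => ψ (t:ℂ)))
    (hodd : ∀ x : ℝ, ψ ((-x : ℝ) : ℂ) = -ψ (x : ℂ))
    (g : ℂ → ℂ)
    (hg : ∀ ξ : ℂ, g ξ = -(∫ t in Set.Ioi ξ.re, ψ (t : ℂ))
        + ∫ s in (0 : ℝ)..ξ.im, ψ (ξ.re + s * Complex.I) * Complex.I)
    (x : ℝ) : |x|^k * ‖g (x:ℂ)‖ ≤ C * Real.pi := by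
  have hgx : g (x:ℂ) = -(∫ t in Set.Ioi x, ψ (t:ℂ)) := by
    rw [hg (x:ℂ)]
    simp
  have hkey : ‖g (x:ℂ)‖ ≤ C * Real.pi / (1 + |x|)^k := by
    rcases le_or_gt 0 x with hx | hx
    · rw [hgx, norm_neg]
      apply pw_tail_bound hcont hC hb hint measurableSet_Ioi x
      intro t ht
      rw [Set.mem_Ioi] at ht
      rw [_root_.abs_of_nonneg hx, _root_.abs_of_pos (lt_of_le_of_lt hx ht)]
      exact ht.le
    · have hsplit : (∫ t in Set.Iic x, ψ (t:ℂ)) + ∫ t in Set.Ioi x, ψ (t:ℂ) = 0 := by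
        have h0 := MeasureTheory.integral_add_compl (measurableSet_Iic (a := x)) hint
        rw [Set.compl_Iic, pw_total_zero hint hodd] at h0
        exact h0
      have : g (x:ℂ) = ∫ t in Set.Iic x, ψ (t:ℂ) := by
        rw [hgx]; linear_combination -hsplit
      rw [this]
      apply pw_tail_bound hcont hC hb hint measurableSet_Iic x
      intro t ht
      rw [Set.mem_Iic] at ht
      rw [_root_.abs_of_neg hx, _root_.abs_of_neg (lt_of_le_of_lt ht hx)]
      linarith
  calc |x|^k * ‖g (x:ℂ)‖ ≤ (1 + |x|)^k * (C * Real.pi / (1 + |x|)^k) := by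
        apply mul_le_mul (pow_le_pow_left₀ (abs_nonneg x) (by linarith [abs_nonneg x]) k)
          hkey (norm_nonneg _) (by positivity)
    _ = C * Real.pi := by field_simp


/-- The antiderivative construction in the Paley–Wiener argument: if `ψ` is entire with
`|ψ z| ≤ C_N e^(|Im z|)/(1+|z|)^N` for every `N`, real and odd on `ℝ`, and
`g ξ = -∫_{Re ξ}^∞ ψ t dt + ∫_{γ₂} ψ z dz` (with `γ₂` the vertical segment from `Re ξ`
to `ξ`), then `g` is entire with `g' = ψ`, `g` restricted to `ℝ` is Schwartz, and
`|g ξ| ≤ C (1 + |ξ|) e^(|Im ξ|)`. -/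
theorem stmt16 (ψ : ℂ → ℂ) (hent : Differentiable ℂ ψ)
    (hbd : ∀ N : ℕ, ∃ C : ℝ, 0 < C ∧
      ∀ z : ℂ, ‖ψ z‖ ≤ C * Real.exp |z.im| / (1 + ‖z‖) ^ N)
    (hreal : ∀ x : ℝ, (ψ (x : ℂ)).im = 0)
    (hodd : ∀ x : ℝ, ψ ((-x : ℝ) : ℂ) = -ψ (x : ℂ))
    (g : ℂ → ℂ)
    (hg : ∀ ξ : ℂ, g ξ = -(∫ t in Set.Ioi ξ.re, ψ (t : ℂ))
        + ∫ s in (0 : ℝ)..ξ.im, ψ (ξ.re + s * Complex.I) * Complex.I) :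
    Differentiable ℂ g ∧
    (∀ ξ : ℂ, HasDerivAt g (ψ ξ) ξ) ∧
    (∃ gr : SchwartzMap ℝ ℂ, ∀ x : ℝ, gr x = g (x : ℂ)) ∧
    (∃ C : ℝ, 0 < C ∧ ∀ ξ : ℂ, ‖g ξ‖ ≤ C * (1 + ‖ξ‖) * Real.exp |ξ.im|) := by
  obtain ⟨C1, hC1, hb1⟩ := hbd 1
  obtain ⟨C2, hC2, hb2⟩ := hbd 2
  have hcont : Continuous ψ := hent.continuous
  have hint : Integrable (fun t : ℝ => ψ (t:ℂ)) := pw_integrable hcont hC2 hb2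
  have hder : ∀ ξ : ℂ, HasDerivAt g (ψ ξ) ξ := pw_hasDerivAt hent hint g hg
  have hdiff : Differentiable ℂ g := fun ξ => (hder ξ).differentiableAt
  refine ⟨hdiff, hder, ?_, ?_⟩
  · -- Schwartz restriction
    have hsmooth : ContDiff ℝ (↑(⊤:ℕ∞)) (fun x : ℝ => g (x:ℂ)) :=
      (hdiff.contDiff.restrict_scalars ℝ).comp Complex.ofRealCLM.contDiff
    have hderiv_gr : deriv (fun x : ℝ => g (x:ℂ)) = fun x : ℝ => ψ (x:ℂ) := by
      funext t
      exact ((hder (t:ℂ)).comp_ofReal).deriv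
    refine ⟨SchwartzMap.mk _ hsmooth ?_, fun x => rfl⟩
    intro k n
    match n with
    | 0 =>
      obtain ⟨Ck, hCk, hbk⟩ := hbd (k+2)
      refine ⟨Ck * Real.pi, fun x => ?_⟩
      rw [norm_iteratedFDeriv_zero, Real.norm_eq_abs]
      exact pw_g_decay hcont hCk hbk hint hodd g hg x
    | (m+1) =>
      obtain ⟨Ck, hCk, hbk⟩ := hbd k
      refine ⟨m.factorial * (Ck * Real.exp 1 * 2^k), fun x => ?_⟩
      have key : iteratedDeriv (m+1) (fun x : ℝ => g (x:ℂ)) x = iteratedDeriv m ψ (x:ℂ) := by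
        rw [iteratedDeriv_succ', hderiv_gr]
        exact pw_restrict_iteratedDeriv m ψ hent x
      rw [norm_iteratedFDeriv_eq_norm_iteratedDeriv, key, Real.norm_eq_abs]
      calc |x|^k * ‖iteratedDeriv m ψ (x:ℂ)‖
          ≤ (1 + |x|)^k * (m.factorial * (Ck * Real.exp 1 * 2^k) / (1 + |x|)^k) := by
            apply mul_le_mul (pow_le_pow_left₀ (abs_nonneg x) (by linarith [abs_nonneg x]) k)
              (pw_cauchy_est hent hCk hbk m x) (norm_nonneg _) (by positivity)
        _ = m.factorial * (Ck * Real.exp 1 * 2^k) := by field_simp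
  · refine ⟨C2 * Real.pi + C1, by positivity, ?_⟩
    exact pw_growth hcont hC1 hC2 hb1 hb2 g hg
end
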